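/- Let y₀ ∈ ℝ and let p ≠ q be points of the Euclidean plane with y(p) ≤ y₀, y(q) ≤ y₀ and dist(p,q) < 2. Then the set {z : dist(z,p) = 1 ∧ dist(z,q) = 1 ∧ y(z) ≥ y₀} contains at most one point. (Observation 2.1: two upper arcs of unit circles whose centers lie on or below a horizontal line intersect at most once on or above that line.) -/

import Mathlib

/-- The Euclidean plane. -/
abbrev Plane := EuclideanSpace ℝ (Fin 2)

/-- Pure real-arithmetic core of the argument: two points `z, w` at distance 1
from both `p` and `q` lie on the perpendicular bisector of `pq`; if distinct
they are symmetric about the line `pq`, which is impossible given the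
vertical constraints. -/
lemma aux_upper (p0 p1 q0 q1 z0 z1 w0 w1 y₀ : ℝ)
    (h1 : (z0-p0)^2+(z1-p1)^2 = 1) (h2 : (z0-q0)^2+(z1-q1)^2 = 1)
    (h3 : (w0-p0)^2+(w1-p1)^2 = 1) (h4 : (w0-q0)^2+(w1-q1)^2 = 1)
    (hp : p1 ≤ y₀) (hq : q1 ≤ y₀) (hz : y₀ ≤ z1) (hw : y₀ ≤ w1)
    (hS : 0 < (p0-q0)^2+(p1-q1)^2) :
    z0 = w0 ∧ z1 = w1 := by
  have hSne : (p0-q0)^2+(p1-q1)^2 ≠ 0 := ne_of_gt hS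
  have hA : (2*z0-p0-q0)*(p0-q0) + (2*z1-p1-q1)*(p1-q1) = 0 := by
    linear_combination h2 - h1
  have hB : (2*w0-p0-q0)*(p0-q0) + (2*w1-p1-q1)*(p1-q1) = 0 := by
    linear_combination h4 - h3
  have hL : ((2*z1-p1-q1)*(p0-q0) - (2*z0-p0-q0)*(p1-q1))^2
      = ((p0-q0)^2+(p1-q1)^2) * (4 - ((p0-q0)^2+(p1-q1)^2)) := by
    linear_combination (2*((p0-q0)^2+(p1-q1)^2))*h1 + (2*((p0-q0)^2+(p1-q1)^2))*h2
      - ((2*z0-p0-q0)*(p0-q0) + (2*z1-p1-q1)*(p1-q1))*hA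
  have hM : ((2*w1-p1-q1)*(p0-q0) - (2*w0-p0-q0)*(p1-q1))^2
      = ((p0-q0)^2+(p1-q1)^2) * (4 - ((p0-q0)^2+(p1-q1)^2)) := by
    linear_combination (2*((p0-q0)^2+(p1-q1)^2))*h3 + (2*((p0-q0)^2+(p1-q1)^2))*h4
      - ((2*w0-p0-q0)*(p0-q0) + (2*w1-p1-q1)*(p1-q1))*hB
  set L := (2*z1-p1-q1)*(p0-q0) - (2*z0-p0-q0)*(p1-q1) with hLdef
  set M := (2*w1-p1-q1)*(p0-q0) - (2*w0-p0-q0)*(p1-q1) with hMdef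
  have e1 : (2*z0-p0-q0)*((p0-q0)^2+(p1-q1)^2) = -L*(p1-q1) := by
    rw [hLdef]; linear_combination (p0-q0)*hA
  have e2 : (2*z1-p1-q1)*((p0-q0)^2+(p1-q1)^2) = L*(p0-q0) := by
    rw [hLdef]; linear_combination (p1-q1)*hA
  have e3 : (2*w0-p0-q0)*((p0-q0)^2+(p1-q1)^2) = -M*(p1-q1) := by
    rw [hMdef]; linear_combination (p0-q0)*hB
  have e4 : (2*w1-p1-q1)*((p0-q0)^2+(p1-q1)^2) = M*(p0-q0) := by
    rw [hMdef]; linear_combination (p1-q1)*hB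
  have hsq : (L - M) * (L + M) = 0 := by linear_combination hL - hM
  rcases mul_eq_zero.mp hsq with hc | hc
  · -- the case `L = M`: the two points coincide
    have hx : (z0 - w0) * ((p0-q0)^2+(p1-q1)^2) = 0 := by
      linear_combination (e1 - e3)/2 - ((p1-q1)/2)*hc
    have hy : (z1 - w1) * ((p0-q0)^2+(p1-q1)^2) = 0 := by
      linear_combination (e2 - e4)/2 + ((p0-q0)/2)*hc
    constructor
    · rcases mul_eq_zero.mp hx with h | h
      · linarith
      · exact absurd h hSne
    · rcases mul_eq_zero.mp hy with h | h
      · linarith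
      · exact absurd h hSne
  · -- the case `L = -M`: mirror images, forced onto the line itself
    have hsum : (z1 + w1 - p1 - q1) * ((p0-q0)^2+(p1-q1)^2) = 0 := by
      linear_combination (e2 + e4)/2 + ((p0-q0)/2)*hc
    have hsum' : z1 + w1 = p1 + q1 := by
      rcases mul_eq_zero.mp hsum with h | h
      · linarith
      · exact absurd h hSne
    have hd1 : p1 - q1 = 0 := by linarith
    have hd0 : p0 - q0 ≠ 0 := by
      intro h
      rw [h, hd1] at hS; norm_num at hS
    have hL0 : L = 0 := by
      have hz2 : L * (p0-q0) = 0 := by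
        have h2z : 2*z1 - p1 - q1 = 0 := by linarith
        linear_combination -e2 + ((p0-q0)^2+(p1-q1)^2)*h2z
      exact (mul_eq_zero.mp hz2).resolve_right hd0
    have hM0 : M = 0 := by linarith [hL0, hc]
    have hx : (z0 - w0) * ((p0-q0)^2+(p1-q1)^2) = 0 := by
      linear_combination (e1 - e3)/2 - ((p1-q1)/2)*hL0 + ((p1-q1)/2)*hM0
    constructor
    · rcases mul_eq_zero.mp hx with h | h
      · linarith
      · exact absurd h hSne
    · linarith

/-- Two upper arcs of unit circles whose centers lie on or below a horizontal
line `y = y₀` intersect at most once on or above that line. -/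
theorem upper_arcs_cross_at_most_once (y₀ : ℝ) (p q : Plane)
    (hpq : p ≠ q) (hp : p 1 ≤ y₀) (hq : q 1 ≤ y₀) (hd : dist p q < 2) :
    Set.Subsingleton {z : Plane | dist z p = 1 ∧ dist z q = 1 ∧ z 1 ≥ y₀} := by
  have coord : ∀ z c : Plane, dist z c = 1 → (z 0 - c 0)^2 + (z 1 - c 1)^2 = 1 := by
    intro z c h
    rw [EuclideanSpace.dist_eq, Fin.sum_univ_two] at h
    simp only [Real.dist_eq, sq_abs] at h
    have h2 := congrArg (·^2) h
    simpa [Real.sq_sqrt (by positivity : (0:ℝ) ≤ (z 0 - c 0)^2 + (z 1 - c 1)^2)] using h2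
  have hS : 0 < (p 0 - q 0)^2 + (p 1 - q 1)^2 := by
    have hd' : 0 < dist p q := dist_pos.mpr hpq
    rw [EuclideanSpace.dist_eq, Fin.sum_univ_two] at hd'
    simp only [Real.dist_eq, sq_abs] at hd'
    nlinarith [Real.sq_sqrt (by positivity : (0:ℝ) ≤ (p 0 - q 0)^2 + (p 1 - q 1)^2)]
  rintro z ⟨hz1, hz2, hz3⟩ w ⟨hw1, hw2, hw3⟩
  obtain ⟨h0, h1⟩ := aux_upper (p 0) (p 1) (q 0) (q 1) (z 0) (z 1) (w 0) (w 1) y₀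
    (coord z p hz1) (coord z q hz2) (coord w p hw1) (coord w q hw2)
    hp hq hz3 hw3 hS
  ext i; fin_cases i <;> assumption
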